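/- Let 0 < θ ≤ 5/9 and consider the system over ℝ²: x³ + (18/5)·(θ²/2^{1/3})·x·y² = x and (9/5)·θ·x²·y + (6/7)·(θ³/2^{1/3})·y³ = y. Then its solution set is exactly {(0,0), (−1,0), (1,0), (0, y₁⁺), (0, y₁⁻)}, where y₁^± = ±(2^{1/6}/θ)·√(7/(6θ)). -/

import Mathlib

set_option maxHeartbeats 1000000


open MeasureTheory Set

noncomputable def cbrt (x : ℝ) : ℝ := Real.sign x * |x| ^ ((1:ℝ)/3)

theorem stmt9 (θ : ℝ) (hθ0 : 0 < θ) (hθ1 : θ ≤ 5/9) (x y : ℝ) :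
    (x^3 + (18/5) * (θ^2 / cbrt 2) * x * y^2 = x ∧
     (9/5) * θ * x^2 * y + (6/7) * (θ^3 / cbrt 2) * y^3 = y) ↔
      ((x, y) = (0, 0) ∨ (x, y) = (-1, 0) ∨ (x, y) = (1, 0) ∨
       (x, y) = (0, (2:ℝ)^((1:ℝ)/6) / θ * Real.sqrt (7/(6*θ))) ∨
       (x, y) = (0, -((2:ℝ)^((1:ℝ)/6) / θ * Real.sqrt (7/(6*θ))))) := by
  have hc : cbrt 2 = (2:ℝ)^((1:ℝ)/3) := by
    unfold cbrt
    rw [Real.sign_of_pos (by norm_num), abs_of_pos (by norm_num), one_mul]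
  have hcpos : (0:ℝ) < (2:ℝ)^((1:ℝ)/3) := Real.rpow_pos_of_pos (by norm_num) _
  set c := (2:ℝ)^((1:ℝ)/3) with hcdef
  have hcne : c ≠ 0 := ne_of_gt hcpos
  have hθne : θ ≠ 0 := ne_of_gt hθ0
  have h16 : ((2:ℝ)^((1:ℝ)/6))^2 = c := by
    rw [hcdef, ← Real.rpow_natCast ((2:ℝ)^((1:ℝ)/6)) 2, ← Real.rpow_mul (by norm_num)]
    norm_num
  set y1 := (2:ℝ)^((1:ℝ)/6) / θ * Real.sqrt (7/(6*θ)) with hy1def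
  have hy1sq : 6*θ^3*y1^2 = 7*c := by
    have h7 : (0:ℝ) ≤ 7/(6*θ) := by positivity
    rw [hy1def, mul_pow, div_pow, Real.sq_sqrt h7, h16]
    field_simp
  simp only [Prod.mk.injEq, hc]
  constructor
  · rintro ⟨h1, h2⟩
    by_cases hx : x = 0
    · by_cases hy : y = 0
      · exact Or.inl ⟨hx, hy⟩
      · subst hx
        have h2' : 6*θ^3*y^2 = 7*c := by
          apply mul_right_cancel₀ hy
          field_simp at h2
          linear_combination (y/5)*h2
        have hfac : (y - y1) * (y + y1) = 0 := by
          have h6 : (6:ℝ)*θ^3 ≠ 0 := by positivity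
          apply mul_left_cancel₀ h6
          linear_combination h2' - hy1sq
        rcases mul_eq_zero.mp hfac with h | h
        · exact Or.inr (Or.inr (Or.inr (Or.inl ⟨rfl, by linarith⟩)))
        · exact Or.inr (Or.inr (Or.inr (Or.inr ⟨rfl, by linarith⟩)))
    · have e1 : c*x^2 + (18/5)*θ^2*y^2 = c := by
        apply mul_left_cancel₀ hx
        field_simp at h1 ⊢
        linear_combination h1
      by_cases hy : y = 0
      · subst hy
        have hx2 : x^2 = 1 := by
          have : c * x^2 = c * 1 := by linarith [e1]
          have := mul_left_cancel₀ hcne this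
          linarith
        have hfac : (x - 1) * (x + 1) = 0 := by linear_combination hx2
        rcases mul_eq_zero.mp hfac with h | h
        · exact Or.inr (Or.inr (Or.inl ⟨by linarith, rfl⟩))
        · exact Or.inr (Or.inl ⟨by linarith, rfl⟩)
      · exfalso
        have e2 : (9/5)*θ*c*x^2 + (6/7)*θ^3*y^2 = c := by
          apply mul_left_cancel₀ hy
          field_simp at h2 ⊢
          linear_combination h2
        have key : (984/175)*θ^3*y^2 = ((9/5)*θ - 1)*c := by
          linear_combination (9/5)*θ*e1 - e2
        have hy2 : 0 < y^2 := lt_of_le_of_ne (sq_nonneg y) (Ne.symm (pow_ne_zero 2 hy))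
        have hθ3 : 0 < θ^3 := pow_pos hθ0 3
        have hL : 0 < (984/175)*θ^3*y^2 := by
          have := mul_pos hθ3 hy2
          linarith
        have hR : ((9/5)*θ - 1)*c ≤ 0 :=
          mul_nonpos_of_nonpos_of_nonneg (by linarith) hcpos.le
        linarith [key]
  · have hkey : (θ^3/c)*y1^3 = (7/6)*y1 := by
      rw [div_mul_eq_mul_div, div_eq_iff hcne]
      linear_combination (y1/6)*hy1sq
    rintro (⟨hx, hy⟩ | ⟨hx, hy⟩ | ⟨hx, hy⟩ | ⟨hx, hy⟩ | ⟨hx, hy⟩) <;> subst hx <;> subst hy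
    · exact ⟨by ring, by ring⟩
    · exact ⟨by ring, by ring⟩
    · exact ⟨by ring, by ring⟩
    · exact ⟨by ring, by linear_combination (6/7)*hkey⟩
    · exact ⟨by ring, by linear_combination -(6/7)*hkey⟩
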